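/- Let V, E be finite index sets, let H̄₂ : ℝ^V → ℝ^V and H₁ : ℝ^E → ℝ^E be symmetric linear maps, T : ℝ^E × ℝ^E → ℝ^V a bilinear map, R ∈ ℝ^E, h̃ₛ ∈ ℝ^V, g ∈ ℝ, and define the discrete shallow-water Hamiltonian H(v, h̃) := (g/2) h̃ᵀ H̄₂ h̃ + g h̃ᵀ H̄₂ h̃ₛ + ½ (H̄₂ h̃)ᵀ T(v − R, H₁(v − R)). Let D₁ : ℝ^V → ℝ^E be linear, D̄₂ := −D₁ᵀ, and for each t let Q(t) : ℝ^E → ℝ^E satisfy Q(t)ᵀ = −Q(t). If differentiable curves v : ℝ → ℝ^E, h̃ : ℝ → ℝ^V satisfy v′ = −Q(t) F(t) − D₁ B(t) and h̃′ = −D̄₂ F(t), where u := v − R, h⁰ := H̄₂ h̃, F := ½ T₁*(h⁰, H₁ u) + ½ H₁ T₂*(h⁰, u), and B := g H̄₂ (h̃ + h̃ₛ) + ½ H̄₂ T(u, H₁ u), then t ↦ H(v(t), h̃(t)) is constant. -/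

import Mathlib

open Matrix

section aux
variable {n m : Type*} [Fintype n] [Fintype m] {f g : ℝ → n → ℝ} {f' g' : n → ℝ} {t : ℝ}

private lemma hasDerivAt_dot' (hf : HasDerivAt f f' t) (hg : HasDerivAt g g' t) :
    HasDerivAt (fun s => f s ⬝ᵥ g s) (f' ⬝ᵥ g t + f t ⬝ᵥ g') t := by
  simp only [dotProduct]
  rw [← Finset.sum_add_distrib]
  exact HasDerivAt.fun_sum fun i _ =>
    ((hasDerivAt_pi.1 hf i).mul (hasDerivAt_pi.1 hg i))

private lemma hasDerivAt_mulVec' (M : Matrix m n ℝ) (hf : HasDerivAt f f' t) :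
    HasDerivAt (fun s => M *ᵥ f s) (M *ᵥ f') t := by
  rw [hasDerivAt_pi]
  intro i
  simp only [mulVec, dotProduct]
  exact HasDerivAt.fun_sum fun j _ => (hasDerivAt_pi.1 hf j).const_mul (M i j)

private lemma hasDerivAt_bilin' {V E : Type*} [Fintype V] [Fintype E]
    (T : (E → ℝ) →ₗ[ℝ] (E → ℝ) →ₗ[ℝ] (V → ℝ)) {a b : ℝ → E → ℝ} {a' b' : E → ℝ} {t : ℝ}
    (ha : HasDerivAt a a' t) (hb : HasDerivAt b b' t) :
    HasDerivAt (fun s => T (a s) (b s)) (T a' (b t) + T (a t) b') t := by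
  let L : (E → ℝ) →ₗ[ℝ] ((E → ℝ) →L[ℝ] (V → ℝ)) :=
    (LinearMap.toContinuousLinearMap.toLinearMap).comp T
  have hL : HasDerivAt (fun s => L (a s)) (L a') t := by
    have h1 := (LinearMap.toContinuousLinearMap L).hasFDerivAt (x := a t)
    have := h1.comp_hasDerivAt t ha
    exact this
  have := hL.clm_apply hb
  simpa [L] using this

private lemma dot_transpose_mulVec' (A : Matrix m n ℝ) (x : m → ℝ) (y : n → ℝ) :
    (Aᵀ *ᵥ x) ⬝ᵥ y = x ⬝ᵥ (A *ᵥ y) := by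
  rw [mulVec_transpose, dotProduct_mulVec]

end aux


/-- Total energy conservation for the explicit discrete shallow-water Hamiltonian
`H(v, h̃) = (g/2) h̃ᵀH̄₂h̃ + g h̃ᵀH̄₂h̃ₛ + ½ (H̄₂h̃)ᵀ T(v−R, H₁(v−R))`, with symmetric
Hodge stars `H̄₂`, `H₁`, bilinear kinetic-energy wedge product `T` with topological
adjoints `T₁s`, `T₂s`, antisymmetric PV-flux operators `Q(t)`, `D̄₂ = −D₁ᵀ`, and
equations of motion `v′ = −Q(t)F − D₁B`, `h̃′ = −D̄₂F` for the mass flux `F` and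
Bernoulli function `B`. -/
theorem discrete_swe_energy_conservation
    {V E : Type*} [Fintype V] [Fintype E]
    (Hb₂ : Matrix V V ℝ) (H₁ : Matrix E E ℝ)
    (hHb₂ : Hb₂ᵀ = Hb₂) (hH₁ : H₁ᵀ = H₁)
    (T : (E → ℝ) →ₗ[ℝ] (E → ℝ) →ₗ[ℝ] (V → ℝ))
    (T₁s T₂s : (V → ℝ) →ₗ[ℝ] (E → ℝ) →ₗ[ℝ] (E → ℝ))
    (hT₁ : ∀ (x : V → ℝ) (a b : E → ℝ), x ⬝ᵥ T a b = a ⬝ᵥ T₁s x b)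
    (hT₂ : ∀ (x : V → ℝ) (a b : E → ℝ), x ⬝ᵥ T a b = b ⬝ᵥ T₂s x a)
    (R : E → ℝ) (hts : V → ℝ) (g : ℝ)
    (Ham : (E → ℝ) → (V → ℝ) → ℝ)
    (hHam : ∀ (vv : E → ℝ) (hh : V → ℝ),
      Ham vv hh = (g / 2) * (hh ⬝ᵥ (Hb₂ *ᵥ hh)) + g * (hh ⬝ᵥ (Hb₂ *ᵥ hts))
        + (1 / 2) * ((Hb₂ *ᵥ hh) ⬝ᵥ T (vv - R) (H₁ *ᵥ (vv - R))))
    (D₁ : Matrix E V ℝ) (Q : ℝ → Matrix E E ℝ)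
    (hQ : ∀ t, (Q t)ᵀ = -(Q t))
    (v : ℝ → E → ℝ) (ht : ℝ → V → ℝ)
    (u : ℝ → E → ℝ) (h0 : ℝ → V → ℝ) (F : ℝ → E → ℝ) (B : ℝ → V → ℝ)
    (hu : ∀ t, u t = v t - R)
    (hh0 : ∀ t, h0 t = Hb₂ *ᵥ ht t)
    (hF : ∀ t, F t = (1 / 2 : ℝ) • T₁s (h0 t) (H₁ *ᵥ u t)
        + (1 / 2 : ℝ) • (H₁ *ᵥ T₂s (h0 t) (u t)))
    (hB : ∀ t, B t = g • (Hb₂ *ᵥ (ht t + hts))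
        + (1 / 2 : ℝ) • (Hb₂ *ᵥ T (u t) (H₁ *ᵥ u t)))
    (hv : ∀ t, HasDerivAt v (-(Q t *ᵥ F t) - D₁ *ᵥ B t) t)
    (hh : ∀ t, HasDerivAt ht (-((-D₁ᵀ) *ᵥ F t)) t) :
    ∀ s t : ℝ, Ham (v s) (ht s) = Ham (v t) (ht t) := by
  have key : ∀ τ : ℝ, HasDerivAt (fun s => Ham (v s) (ht s)) 0 τ := by
    intro τ
    -- abbreviations
    set uτ : E → ℝ := v τ - R with huτ
    set hτ : V → ℝ := ht τ with hhτ
    set vd : E → ℝ := -(Q τ *ᵥ F τ) - D₁ *ᵥ B τ with hvd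
    set hd : V → ℝ := D₁ᵀ *ᵥ F τ with hhd
    have hvd' : HasDerivAt v vd τ := hv τ
    have hhd' : HasDerivAt ht hd τ := by
      have := hh τ
      simpa [Matrix.neg_mulVec, hhd] using this
    have hud : HasDerivAt (fun s => v s - R) vd τ := hvd'.sub_const R
    -- derivatives of the three terms
    have d1 : HasDerivAt (fun s => ht s ⬝ᵥ (Hb₂ *ᵥ ht s))
        (hd ⬝ᵥ (Hb₂ *ᵥ hτ) + hτ ⬝ᵥ (Hb₂ *ᵥ hd)) τ :=
      hasDerivAt_dot' hhd' (hasDerivAt_mulVec' Hb₂ hhd')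
    have d2 : HasDerivAt (fun s => ht s ⬝ᵥ (Hb₂ *ᵥ hts))
        (hd ⬝ᵥ (Hb₂ *ᵥ hts) + hτ ⬝ᵥ (0 : V → ℝ)) τ :=
      hasDerivAt_dot' hhd' (hasDerivAt_const τ _)
    have d3 : HasDerivAt (fun s => (Hb₂ *ᵥ ht s) ⬝ᵥ T (v s - R) (H₁ *ᵥ (v s - R)))
        ((Hb₂ *ᵥ hd) ⬝ᵥ T uτ (H₁ *ᵥ uτ)
          + (Hb₂ *ᵥ hτ) ⬝ᵥ (T vd (H₁ *ᵥ uτ) + T uτ (H₁ *ᵥ vd))) τ :=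
      hasDerivAt_dot' (hasDerivAt_mulVec' Hb₂ hhd')
        (hasDerivAt_bilin' T hud (hasDerivAt_mulVec' H₁ hud))
    have hD : HasDerivAt (fun s => Ham (v s) (ht s))
        ((g / 2) * (hd ⬝ᵥ (Hb₂ *ᵥ hτ) + hτ ⬝ᵥ (Hb₂ *ᵥ hd))
          + g * (hd ⬝ᵥ (Hb₂ *ᵥ hts) + hτ ⬝ᵥ (0 : V → ℝ))
          + (1 / 2) * ((Hb₂ *ᵥ hd) ⬝ᵥ T uτ (H₁ *ᵥ uτ)
              + (Hb₂ *ᵥ hτ) ⬝ᵥ (T vd (H₁ *ᵥ uτ) + T uτ (H₁ *ᵥ vd)))) τ := by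
      simp only [hHam]
      exact ((d1.const_mul (g / 2)).add (d2.const_mul g)).add (d3.const_mul (1 / 2))
    -- now show the derivative value is zero
    have k1 : hτ ⬝ᵥ (Hb₂ *ᵥ hd) = hd ⬝ᵥ (Hb₂ *ᵥ hτ) := by
      rw [← dot_transpose_mulVec' Hb₂ hτ hd, hHb₂, dotProduct_comm]
    have k2 : (Hb₂ *ᵥ hd) ⬝ᵥ T uτ (H₁ *ᵥ uτ) = hd ⬝ᵥ (Hb₂ *ᵥ T uτ (H₁ *ᵥ uτ)) := by
      conv_lhs => rw [← hHb₂]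
      exact dot_transpose_mulVec' Hb₂ hd _
    have k3 : (Hb₂ *ᵥ hτ) ⬝ᵥ T vd (H₁ *ᵥ uτ) = vd ⬝ᵥ T₁s (Hb₂ *ᵥ hτ) (H₁ *ᵥ uτ) :=
      hT₁ _ _ _
    have k4 : (Hb₂ *ᵥ hτ) ⬝ᵥ T uτ (H₁ *ᵥ vd) = vd ⬝ᵥ (H₁ *ᵥ T₂s (Hb₂ *ᵥ hτ) uτ) := by
      rw [hT₂]
      conv_lhs => rw [← hH₁]
      exact dot_transpose_mulVec' H₁ vd _
    have kB : hd ⬝ᵥ B τ = g * (hd ⬝ᵥ (Hb₂ *ᵥ hτ)) + g * (hd ⬝ᵥ (Hb₂ *ᵥ hts))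
        + (1 / 2) * (hd ⬝ᵥ (Hb₂ *ᵥ T uτ (H₁ *ᵥ uτ))) := by
      rw [hB τ, hu τ, ← huτ, ← hhτ]
      simp [dotProduct_add, dotProduct_smul, Matrix.mulVec_add, smul_eq_mul]
    have kF : vd ⬝ᵥ F τ = (1 / 2) * (vd ⬝ᵥ T₁s (Hb₂ *ᵥ hτ) (H₁ *ᵥ uτ))
        + (1 / 2) * (vd ⬝ᵥ (H₁ *ᵥ T₂s (Hb₂ *ᵥ hτ) uτ)) := by
      rw [hF τ, hu τ, hh0 τ, ← huτ, ← hhτ]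
      simp [dotProduct_add, dotProduct_smul, smul_eq_mul]
    have kQ : (Q τ *ᵥ F τ) ⬝ᵥ F τ = 0 := by
      have h1 : (Q τ *ᵥ F τ) ⬝ᵥ F τ = F τ ⬝ᵥ (Q τ *ᵥ F τ) := dotProduct_comm _ _
      have h2 : ((Q τ)ᵀ *ᵥ F τ) ⬝ᵥ F τ = F τ ⬝ᵥ (Q τ *ᵥ F τ) :=
        dot_transpose_mulVec' (Q τ) (F τ) (F τ)
      rw [hQ τ, Matrix.neg_mulVec, neg_dotProduct] at h2
      linarith [h1, h2]
    have kBd : hd ⬝ᵥ B τ = F τ ⬝ᵥ (D₁ *ᵥ B τ) := by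
      rw [hhd]; exact dot_transpose_mulVec' D₁ (F τ) (B τ)
    have kFd : vd ⬝ᵥ F τ = -(F τ ⬝ᵥ (D₁ *ᵥ B τ)) := by
      rw [hvd, sub_dotProduct, neg_dotProduct, kQ, dotProduct_comm]
      ring
    have hzero : (g / 2) * (hd ⬝ᵥ (Hb₂ *ᵥ hτ) + hτ ⬝ᵥ (Hb₂ *ᵥ hd))
          + g * (hd ⬝ᵥ (Hb₂ *ᵥ hts) + hτ ⬝ᵥ (0 : V → ℝ))
          + (1 / 2) * ((Hb₂ *ᵥ hd) ⬝ᵥ T uτ (H₁ *ᵥ uτ)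
              + (Hb₂ *ᵥ hτ) ⬝ᵥ (T vd (H₁ *ᵥ uτ) + T uτ (H₁ *ᵥ vd))) = 0 := by
      rw [dotProduct_add, k1, k2, k3, k4, dotProduct_zero]
      have : g * (hd ⬝ᵥ (Hb₂ *ᵥ hτ)) + g * (hd ⬝ᵥ (Hb₂ *ᵥ hts))
          + (1 / 2) * (hd ⬝ᵥ (Hb₂ *ᵥ T uτ (H₁ *ᵥ uτ)))
          + ((1 / 2) * (vd ⬝ᵥ T₁s (Hb₂ *ᵥ hτ) (H₁ *ᵥ uτ))
            + (1 / 2) * (vd ⬝ᵥ (H₁ *ᵥ T₂s (Hb₂ *ᵥ hτ) uτ))) = 0 := by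
        rw [← kB, ← kF, kBd, kFd]; ring
      linarith [this]
    rw [hzero] at hD
    exact hD
  intro s t
  exact is_const_of_deriv_eq_zero
    (fun x => (key x).differentiableAt) (fun x => (key x).deriv) s t
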